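/- Let P : X → ℝ≥0 on a finite set X with Z := ∑_x P(x) > 0, let Q be a strictly positive probability distribution on X, let κ_A, Z_Q > 0, and suppose ε ∈ [0,1) satisfies ∑_{x∈bad}(P(x) − κ_A·Z_Q·Q(x)) ≤ ε·Z, where bad = {x : P(x) > κ_A·Z_Q·Q(x)}. Then the acceptance probability P_accept := ∑_{x∉bad} P(x)/(Z_Q·κ_A) + ∑_{x∈bad} Q(x) satisfies P_accept ≥ Z·(1 − ε)/(Z_Q·κ_A). -/
import Mathlib


theorem acceptance_prob_lower_bound {X : Type*} [Fintype X] (P Q : X → ℝ) (κA ZQ ε : ℝ)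
    (hP : ∀ x, 0 ≤ P x) (hQ : ∀ x, 0 < Q x) (hQsum : ∑ x, Q x = 1)
    (hZ : 0 < ∑ x, P x) (hκ : 0 < κA) (hZQ : 0 < ZQ)
    (hε0 : 0 ≤ ε) (hε1 : ε < 1)
    (hbad : ∑ x ∈ Finset.univ.filter (fun x => P x > κA * ZQ * Q x), (P x - κA * ZQ * Q x)
              ≤ ε * ∑ x, P x) :
    (∑ x ∈ Finset.univ.filter (fun x => ¬ P x > κA * ZQ * Q x), P x / (ZQ * κA))
      + ∑ x ∈ Finset.univ.filter (fun x => P x > κA * ZQ * Q x), Q x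
      ≥ (∑ x, P x) * (1 - ε) / (ZQ * κA) := by
  set B := Finset.univ.filter (fun x => P x > κA * ZQ * Q x) with hB
  set G := Finset.univ.filter (fun x => ¬ P x > κA * ZQ * Q x) with hG
  have hc : 0 < ZQ * κA := mul_pos hZQ hκ
  have hsplit : ∑ x ∈ G, P x + ∑ x ∈ B, P x = ∑ x, P x := by
    rw [add_comm, hG, hB,
      Finset.sum_filter_add_sum_filter_not Finset.univ (fun x => P x > κA * ZQ * Q x)]
  have hQB : ∑ x ∈ B, Q x = (∑ x ∈ B, P x - ∑ x ∈ B, (P x - κA * ZQ * Q x)) / (ZQ * κA) := by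
    rw [Finset.sum_sub_distrib, eq_div_iff hc.ne', Finset.sum_mul]
    ring_nf
    apply Finset.sum_congr rfl
    intros; ring
  have hGdiv : ∑ x ∈ G, P x / (ZQ * κA) = (∑ x ∈ G, P x) / (ZQ * κA) :=
    (Finset.sum_div _ _ _).symm
  rw [ge_iff_le, div_le_iff₀ hc, hGdiv, hQB, add_mul, div_mul_cancel₀ _ hc.ne',
    div_mul_cancel₀ _ hc.ne']
  nlinarith [hsplit, hbad]
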